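/- arXiv:1411.0222 — 2 statements merged into one kernel-verified Lean document; each statement's English description precedes it below -/
import Mathlib

section
/- For any word η ∈ X* with X = {x₀, x₁} and pairs of series d_{δ,1} = (d_{L,1}, d_R), d_{δ,2} = (d_{L,2}, d_R) with d_{L,1}, d_{L,2} nonzero, one has ord(φ_{d₁}(η)(1) − φ_{d₂}(η)(1)) ≥ |η| + ord(d_{L,1} − d_{L,2}). -/
/-- Formal power series over the alphabet `X = {x₀, x₁}` (encoded as `Bool`,
with `x₀ = false` and `x₁ = true`). -/
abbrev FPS := List Bool → ℝ

/-- The letter `x₀`. -/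
def x₀ : Bool := false

/-- The letter `x₁`. -/
def x₁ : Bool := true

/-- Shuffle product of formal power series, via the left-quotient recursion. -/
noncomputable def shuffle : (List Bool → ℝ) → (List Bool → ℝ) → List Bool → ℝ
  | c, d, [] => c [] * d []
  | c, d, x :: w => shuffle (fun u => c (x :: u)) d w + shuffle c (fun u => d (x :: u)) w

/-- The series `1` (the empty word). -/
noncomputable def oneF : FPS := fun w => match w with | [] => 1 | _ => 0

/-- The series corresponding to a single word. -/
noncomputable def ind (η : List Bool) : FPS := fun w => if w = η then 1 else 0

/-- Left catenation of the series `e` by a letter `x`: the series `x e`. -/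
noncomputable def pre (x : Bool) (e : FPS) : FPS :=
  fun w => match w with
  | [] => 0
  | y :: u => if y = x then e u else 0

/-- The word-indexed family of endomorphisms `φ_d`, determined by
`φ_d(x₀)(e) = x₀ e` and `φ_d(x₁)(e) = x₁(d_L ⧢ e) + x₀(d_R ⧢ e)`. -/
noncomputable def phiW (d : FPS × FPS) : List Bool → FPS → FPS
  | [], e => e
  | x :: η, e =>
      if x then pre x₁ (shuffle d.1 (phiW d η e)) + pre x₀ (shuffle d.2 (phiW d η e))
      else pre x₀ (phiW d η e)

/-- The mixed composition product `c ∘̃ d_δ = Σ_η (c,η) φ_d(η)(1)`.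
(For each word `w` only the finitely many `η` with `|η| ≤ |w|` contribute.) -/
noncomputable def mixedComp (c : FPS) (d : FPS × FPS) : FPS :=
  fun w => ∑' η : List Bool, c η * phiW d η oneF w

/-- Order of a series: minimal word length in the support, `⊤` for the zero series. -/
noncomputable def ord (c : List Bool → ℝ) : ℕ∞ :=
  sInf {n : ℕ∞ | ∃ w, c w ≠ 0 ∧ (w.length : ℕ∞) = n}

/-- `σ` raised to an extended-natural power, with `σ^⊤ = 0`. -/
noncomputable def upow (σ : ℝ) (n : ℕ∞) : ℝ :=
  if n = ⊤ then 0 else σ ^ n.toNat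

/-- The ultrametric distance `dist(c,d) = σ^(ord (c-d))`. -/
lemma pre_nil (x : Bool) (e : FPS) : pre x e [] = 0 := rfl

lemma pre_cons (x : Bool) (e : FPS) (y : Bool) (u : List Bool) :
    pre x e (y :: u) = if y = x then e u else 0 := rfl

lemma le_ord_iff (c : FPS) (m : ℕ∞) :
    m ≤ ord c ↔ ∀ w, c w ≠ 0 → m ≤ (w.length : ℕ∞) := by
  unfold ord
  rw [le_sInf_iff]
  constructor
  · intro h w hw
    exact h _ ⟨w, hw, rfl⟩
  · rintro h n ⟨w, hw, rfl⟩
    exact h w hw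

lemma ord_le_of (c : FPS) (w : List Bool) (h : c w ≠ 0) : ord c ≤ (w.length : ℕ∞) :=
  sInf_le ⟨w, h, rfl⟩

lemma shuffle_support : ∀ (w : List Bool) (c e : FPS), shuffle c e w ≠ 0 →
    ∃ u v, c u ≠ 0 ∧ e v ≠ 0 ∧ u.length + v.length = w.length := by
  intro w
  induction w with
  | nil =>
    intro c e h
    simp only [shuffle] at h
    exact ⟨[], [], left_ne_zero_of_mul h, right_ne_zero_of_mul h, rfl⟩
  | cons x w ih =>
    intro c e h
    simp only [shuffle] at h
    by_cases h1 : shuffle (fun u => c (x :: u)) e w ≠ 0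
    · obtain ⟨u, v, hu, hv, hl⟩ := ih _ _ h1
      exact ⟨x :: u, v, hu, hv, by simp [hl]; omega⟩
    · push_neg at h1
      have h2 : shuffle c (fun u => e (x :: u)) w ≠ 0 := by
        intro h2; exact h (by rw [h1, h2, add_zero])
      obtain ⟨u, v, hu, hv, hl⟩ := ih _ _ h2
      exact ⟨u, x :: v, hu, hv, by simp [← hl]; omega⟩

lemma shuffle_sub_sub : ∀ (w : List Bool) (c d a b : FPS),
    shuffle c a w - shuffle d b w =
      shuffle (fun u => c u - d u) a w + shuffle d (fun u => a u - b u) w := by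
  intro w
  induction w with
  | nil => intro c d a b; simp only [shuffle]; ring
  | cons x w ih =>
    intro c d a b
    simp only [shuffle]
    have h1 := ih (fun u => c (x :: u)) (fun u => d (x :: u)) a b
    have h2 := ih c d (fun u => a (x :: u)) (fun u => b (x :: u))
    linarith [h1, h2]

lemma phiW_len : ∀ (η : List Bool) (d : FPS × FPS) (w : List Bool),
    phiW d η oneF w ≠ 0 → η.length ≤ w.length := by
  intro η
  induction η with
  | nil => intro d w _; simp
  | cons x η ih =>
    intro d w h
    cases x with
    | false =>
      simp only [phiW, if_neg Bool.false_ne_true] at h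
      match w with
      | [] => exact absurd (pre_nil x₀ _) h
      | y :: u =>
        rw [pre_cons] at h
        by_cases hy : y = x₀
        · simp only [if_pos hy] at h
          simpa using Nat.succ_le_succ (ih d u h)
        · simp only [if_neg hy] at h; exact absurd rfl h
    | true =>
      simp only [phiW, if_pos, Pi.add_apply] at h
      match w with
      | [] => rw [pre_nil, pre_nil, add_zero] at h; exact absurd rfl h
      | y :: u =>
        rw [pre_cons, pre_cons] at h
        have hu : shuffle d.1 (phiW d η oneF) u ≠ 0 ∨ shuffle d.2 (phiW d η oneF) u ≠ 0 := by
          by_cases hy : y = x₁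
          · simp only [if_pos hy] at h
            have : ¬ y = x₀ := by simp [x₀, x₁] at hy ⊢; simp [hy]
            simp only [if_neg this, add_zero] at h
            exact Or.inl h
          · simp only [if_neg hy] at h
            have : y = x₀ := by simp [x₀, x₁] at hy ⊢; exact hy
            simp only [if_pos this, zero_add] at h
            exact Or.inr h
        rcases hu with hu | hu <;>
        · obtain ⟨a, b, _, hb, hl⟩ := shuffle_support u _ _ hu
          have := ih d b hb
          simp only [List.length_cons]
          omega

lemma shuffle_zero_left : ∀ (w : List Bool) (a : FPS), shuffle (fun _ => (0:ℝ)) a w = 0 := by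
  intro w
  induction w with
  | nil => intro a; simp [shuffle]
  | cons x w ih => intro a; simp only [shuffle, ih]; ring

lemma succ_step {l u : ℕ} {r : ℕ∞} (h : (l : ℕ∞) + r ≤ (u : ℕ∞)) :
    ((l + 1 : ℕ) : ℕ∞) + r ≤ ((u + 1 : ℕ) : ℕ∞) := by
  push_cast
  rw [add_right_comm]
  exact add_le_add h le_rfl

noncomputable def udist (σ : ℝ) (c d : List Bool → ℝ) : ℝ :=
  upow σ (ord (c - d))

/-- For words, `ord(φ_{d₁}(η)(1) − φ_{d₂}(η)(1)) ≥ |η| + ord(d_{L,1} − d_{L,2})`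
whenever `d₁ = (d_{L,1}, d_R)` and `d₂ = (d_{L,2}, d_R)` with `d_{L,1}, d_{L,2} ≠ 0`. -/
theorem ord_phiW_sub (η : List Bool) (dL₁ dL₂ dR : FPS)
    (h₁ : dL₁ ≠ 0) (h₂ : dL₂ ≠ 0) :
    (η.length : ℕ∞) + ord (dL₁ - dL₂) ≤
      ord (phiW (dL₁, dR) η oneF - phiW (dL₂, dR) η oneF) := by
  induction η with
  | nil =>
    have hz : phiW (dL₁, dR) [] oneF - phiW (dL₂, dR) [] oneF = 0 := by
      funext w; simp [phiW]
    rw [hz]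
    have ho : ord (0 : FPS) = ⊤ := by
      unfold ord
      apply sInf_eq_top.mpr
      rintro n ⟨w, hw, rfl⟩
      simp at hw
    rw [ho]
    exact le_top
  | cons x η ih =>
    set A := phiW (dL₁, dR) η oneF with hA
    set B := phiW (dL₂, dR) η oneF with hB
    set r := ord (dL₁ - dL₂) with hr
    rw [le_ord_iff]
    intro w hw
    have key : ∀ u : List Bool, A u - B u ≠ 0 → (η.length : ℕ∞) + r ≤ (u.length : ℕ∞) := by
      intro u hu
      exact le_trans ih (ord_le_of _ u hu)
    cases x with
    | false =>
      simp only [phiW, Bool.false_eq_true, if_false, Pi.sub_apply] at hw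
      match w with
      | [] => rw [pre_nil, pre_nil, sub_zero] at hw; exact absurd rfl hw
      | y :: u =>
        rw [pre_cons, pre_cons] at hw
        by_cases hy : y = x₀
        · simp only [if_pos hy] at hw
          have := key u hw
          simpa using succ_step this
        · simp only [if_neg hy] at hw; exact absurd (sub_zero 0) hw
    | true =>
      simp only [phiW, if_true, Pi.sub_apply, Pi.add_apply] at hw
      match w with
      | [] =>
        rw [pre_nil, pre_nil, pre_nil, pre_nil] at hw
        simp at hw
      | y :: u =>
        rw [pre_cons, pre_cons, pre_cons, pre_cons] at hw
        have main : (η.length : ℕ∞) + r ≤ (u.length : ℕ∞) := by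
          by_cases hy : y = x₁
          · have hy0 : ¬ y = x₀ := by simp [x₀, x₁] at hy ⊢; simp [hy]
            simp only [if_pos hy, if_neg hy0, add_zero] at hw
            rw [shuffle_sub_sub] at hw
            by_cases h1 : shuffle (fun v => dL₁ v - dL₂ v) A u ≠ 0
            · obtain ⟨a, b, ha, hb, hl⟩ := shuffle_support u _ _ h1
              have hra : r ≤ (a.length : ℕ∞) := ord_le_of _ a ha
              have hlb : (η.length : ℕ∞) ≤ (b.length : ℕ∞) := by
                exact_mod_cast phiW_len η (dL₁, dR) b hb
              calc (η.length : ℕ∞) + r ≤ (b.length : ℕ∞) + (a.length : ℕ∞) :=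
                    add_le_add hlb hra
                _ = (u.length : ℕ∞) := by
                    rw [← Nat.cast_add, add_comm]
                    exact_mod_cast congrArg (Nat.cast : ℕ → ℕ∞) hl
            · push_neg at h1
              have h2 : shuffle dL₂ (fun v => A v - B v) u ≠ 0 := by
                intro h2; exact hw (by rw [h1, h2, add_zero])
              obtain ⟨a, b, _, hb, hl⟩ := shuffle_support u _ _ h2
              have := key b hb
              refine le_trans this ?_
              exact_mod_cast Nat.le.intro (by omega : b.length + a.length = u.length)
          · have hy0 : y = x₀ := by simp [x₀, x₁] at hy ⊢; exact hy
            simp only [if_pos hy0, if_neg hy, zero_add] at hw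
            rw [shuffle_sub_sub] at hw
            have hzz : (fun v => dR v - dR v) = (fun _ => (0:ℝ)) := by
              funext v; ring
            rw [hzz, shuffle_zero_left, zero_add] at hw
            obtain ⟨a, b, _, hb, hl⟩ := shuffle_support u _ _ hw
            have := key b hb
            refine le_trans this ?_
            exact_mod_cast Nat.le.intro (by omega : b.length + a.length = u.length)
        simpa using succ_step main
end

section
/- Define on pairs of series the composition product c_δ ∘ d_δ = ((c_L ∘̃ d_δ) ⧢ d_L, (c_L ∘̃ d_δ) ⧢ d_R + c_R ∘̃ d_δ). Then mixed associativity holds: (c ∘̃ d_δ) ∘̃ e_δ = c ∘̃ (d_δ ∘ e_δ) for all series c and pairs d_δ, e_δ. -/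
/-- The composition product on pairs:
`c_δ ∘ d_δ = ((c_L ∘̃ d_δ) ⧢ d_L, (c_L ∘̃ d_δ) ⧢ d_R + c_R ∘̃ d_δ)`. -/
noncomputable def compD (c d : FPS × FPS) : FPS × FPS :=
  (shuffle (mixedComp c.1 d) d.1,
    shuffle (mixedComp c.1 d) d.2 + mixedComp c.2 d)

/- ### shuffle algebra lemmas -/

lemma shuffle_congr {c c' d d' : FPS} {w : List Bool}
    (hc : ∀ u : List Bool, u.length ≤ w.length → c u = c' u)
    (hd : ∀ u : List Bool, u.length ≤ w.length → d u = d' u) :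
    shuffle c d w = shuffle c' d' w := by
  induction w generalizing c c' d d' with
  | nil => simp only [shuffle, hc [] (by simp), hd [] (by simp)]
  | cons x w ih =>
    simp only [shuffle]
    rw [ih (fun u hu => hc (x :: u) (by simpa using Nat.succ_le_succ hu))
          (fun u hu => hd u (le_trans hu (Nat.le_succ _))),
        ih (fun u hu => hc u (le_trans hu (Nat.le_succ _)))
          (fun u hu => hd (x :: u) (by simpa using Nat.succ_le_succ hu))]

lemma shuffle_zero_right' (c : FPS) (w : List Bool) : shuffle c (fun _ => 0) w = 0 := by
  induction w generalizing c with
  | nil => simp [shuffle]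
  | cons x w ih => simp only [shuffle, ih]; simp

lemma shuffle_add_right' (c d d' : FPS) (w : List Bool) :
    shuffle c (fun u => d u + d' u) w = shuffle c d w + shuffle c d' w := by
  induction w generalizing c d d' with
  | nil => simp [shuffle]; ring
  | cons x w ih => simp only [shuffle, ih]; ring

lemma shuffle_smul_right' (c d : FPS) (r : ℝ) (w : List Bool) :
    shuffle c (fun u => r * d u) w = r * shuffle c d w := by
  induction w generalizing c d with
  | nil => simp [shuffle]; ring
  | cons x w ih => simp only [shuffle, ih]; ring

lemma shuffle_comm' (c d : FPS) (w : List Bool) : shuffle c d w = shuffle d c w := by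
  induction w generalizing c d with
  | nil => simp [shuffle]; ring
  | cons x w ih => simp only [shuffle]; rw [ih, ih c, add_comm]

lemma shuffle_comm (c d : FPS) : shuffle c d = shuffle d c := funext (shuffle_comm' c d)

lemma shuffle_add_left' (c c' d : FPS) (w : List Bool) :
    shuffle (fun u => c u + c' u) d w = shuffle c d w + shuffle c' d w := by
  rw [shuffle_comm', shuffle_add_right', shuffle_comm' d c, shuffle_comm' d c']

lemma shuffle_assoc' (a b c : FPS) (w : List Bool) :
    shuffle (shuffle a b) c w = shuffle a (shuffle b c) w := by
  induction w generalizing a b c with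
  | nil => simp [shuffle]; ring
  | cons x w ih =>
    simp only [shuffle]
    rw [shuffle_add_left', shuffle_add_right', ih, ih, ih, add_assoc]

lemma shuffle_assoc (a b c : FPS) : shuffle (shuffle a b) c = shuffle a (shuffle b c) :=
  funext (shuffle_assoc' a b c)

lemma shuffle_left_comm (a b c : FPS) : shuffle a (shuffle b c) = shuffle b (shuffle a c) := by
  rw [← shuffle_assoc, shuffle_comm a b, shuffle_assoc]

lemma shuffle_eq_zero_right {c d : FPS} {w : List Bool} {k : ℕ}
    (h : ∀ u : List Bool, u.length < k → d u = 0) (hw : w.length < k) : shuffle c d w = 0 := by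
  rw [shuffle_congr (c' := c) (d' := fun _ => 0) (fun _ _ => rfl)
      (fun u hu => h u (lt_of_le_of_lt hu hw))]
  exact shuffle_zero_right' c w


/- ### finiteness -/

def listsLe : ℕ → Finset (List Bool)
  | 0 => {[]}
  | n + 1 => ({[]} ∪ (listsLe n).image (true :: ·)) ∪ (listsLe n).image (false :: ·)

lemma mem_listsLe {n : ℕ} {l : List Bool} : l ∈ listsLe n ↔ l.length ≤ n := by
  induction n generalizing l with
  | zero => cases l <;> simp [listsLe]
  | succ n ih =>
    cases l with
    | nil => simp [listsLe]
    | cons x t => cases x <;> simp [listsLe, ih, Nat.succ_le_succ_iff]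

lemma phiW_eq_zero {e : FPS × FPS} {η u : List Bool} (h : u.length < η.length) :
    phiW e η oneF u = 0 := by
  induction η generalizing u with
  | nil => simp at h
  | cons x t ih =>
    have hz : ∀ v : List Bool, v.length < t.length → phiW e t oneF v = 0 := fun v hv => ih hv
    cases x with
    | false =>
      simp only [phiW, if_neg Bool.false_ne_true]
      cases u with
      | nil => rfl
      | cons y v =>
        simp only [pre, x₀]
        have : v.length < t.length := by simpa using Nat.lt_of_succ_lt_succ h
        rcases Bool.eq_false_or_eq_true y with hy | hy <;> simp [hy, ih this]
    | true =>
      simp only [phiW, if_pos rfl]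
      cases u with
      | nil => simp [pre, Pi.add_apply]
      | cons y v =>
        have hv : v.length < t.length := by simpa using Nat.lt_of_succ_lt_succ h
        have h1 : shuffle e.1 (phiW e t oneF) v = 0 := shuffle_eq_zero_right hz hv
        have h2 : shuffle e.2 (phiW e t oneF) v = 0 := shuffle_eq_zero_right hz hv
        simp [pre, Pi.add_apply, x₀, x₁, h1, h2]

lemma summand_vanish {c : FPS} {e : FPS × FPS} {w : List Bool} :
    ∀ η ∉ listsLe w.length, c η * phiW e η oneF w = 0 := by
  intro η hη
  rw [phiW_eq_zero (by simpa [mem_listsLe, not_le] using hη), mul_zero]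

lemma summand_summable (c : FPS) (e : FPS × FPS) (w : List Bool) :
    Summable (fun η => c η * phiW e η oneF w) :=
  summable_of_ne_finset_zero summand_vanish

lemma mixedComp_eq_sum (c : FPS) (e : FPS × FPS) (w : List Bool) :
    mixedComp c e w = ∑ η ∈ listsLe w.length, c η * phiW e η oneF w :=
  tsum_eq_sum summand_vanish

lemma mixedComp_zero (e : FPS × FPS) : mixedComp (fun _ => 0) e = fun _ => 0 := by
  funext w; simp [mixedComp]

lemma mixedComp_add' (a b : FPS) (e : FPS × FPS) (w : List Bool) :
    mixedComp (fun u => a u + b u) e w = mixedComp a e w + mixedComp b e w := by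
  simp only [mixedComp, add_mul]
  exact Summable.tsum_add (summand_summable a e w) (summand_summable b e w)

lemma mixedComp_add (a b : FPS) (e : FPS × FPS) :
    mixedComp (fun u => a u + b u) e = fun w => mixedComp a e w + mixedComp b e w :=
  funext (mixedComp_add' a b e)

/- shuffle against a Finset sum -/
lemma shuffle_sum_right {ι : Type*} (a : FPS) (s : Finset ι) (g : ι → FPS) (w : List Bool) :
    shuffle a (fun u => ∑ i ∈ s, g i u) w = ∑ i ∈ s, shuffle a (g i) w := by
  classical
  induction s using Finset.induction_on with
  | empty => simpa using shuffle_zero_right' a w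
  | insert _ _ h ih =>
    rename_i j s
    simp only [Finset.sum_insert h]
    rw [shuffle_add_right', ih]

/- pulling a tsum (of the standard shape) through shuffle -/
lemma shuffle_tsum (a : FPS) (r : List Bool → ℝ) (e : FPS × FPS) (w : List Bool) :
    shuffle a (fun u => ∑' η, r η * phiW e η oneF u) w
      = ∑' η, r η * shuffle a (phiW e η oneF) w := by
  have hvan : ∀ η ∉ listsLe w.length, r η * shuffle a (phiW e η oneF) w = 0 := by
    intro η hη
    have hl : w.length < η.length := by simpa [mem_listsLe, not_le] using hη
    rw [shuffle_eq_zero_right (fun u hu => phiW_eq_zero hu) hl, mul_zero]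
  rw [tsum_eq_sum hvan]
  have hcongr : ∀ u : List Bool, u.length ≤ w.length →
      (∑' η, r η * phiW e η oneF u) = ∑ η ∈ listsLe w.length, r η * phiW e η oneF u := by
    intro u hu
    refine tsum_eq_sum ?_
    intro η hη
    have hl : w.length < η.length := by simpa [mem_listsLe, not_le] using hη
    rw [phiW_eq_zero (lt_of_le_of_lt hu hl), mul_zero]
  rw [shuffle_congr (c' := a) (fun _ _ => rfl) hcongr,
    shuffle_sum_right a (listsLe w.length) (fun η => fun u => r η * phiW e η oneF u) w]
  exact Finset.sum_congr rfl fun η _ => shuffle_smul_right' a (phiW e η oneF) (r η) w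

/- tsum reindex along cons -/
lemma tsum_supported_cons (x : Bool) (f : List Bool → ℝ)
    (h : ∀ η : List Bool, η.head? ≠ some x → f η = 0) :
    ∑' η, f η = ∑' η, f (x :: η) := by
  refine (Function.Injective.tsum_eq (g := (x :: ·)) (fun a b hab => by simpa using hab) ?_).symm
  intro η hη
  rcases η with _ | ⟨y, t⟩
  · exact absurd (h [] (by simp)) hη
  · rcases eq_or_ne y x with rfl | hyx
    · exact ⟨t, rfl⟩
    · exact absurd (h (y :: t) (by simpa using hyx)) hη

/- ### derivative formulas for mixedComp -/

lemma mixedComp_nil (c : FPS) (e : FPS × FPS) : mixedComp c e [] = c [] := by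
  have : ∀ η : List Bool, η ≠ [] → c η * phiW e η oneF [] = 0 := by
    intro η hη
    rw [phiW_eq_zero (by cases η with | nil => exact absurd rfl hη | cons x t => simp), mul_zero]
  rw [mixedComp, tsum_eq_single [] this]
  simp [phiW, oneF]

lemma mixedComp_cons_true (c : FPS) (e : FPS × FPS) (w : List Bool) :
    mixedComp c e (true :: w) = shuffle e.1 (mixedComp (fun u => c (true :: u)) e) w := by
  have hsupp : ∀ η : List Bool, η.head? ≠ some true →
      c η * phiW e η oneF (true :: w) = 0 := by
    intro η hη
    rcases η with _ | ⟨y, t⟩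
    · simp [phiW, oneF]
    · cases y
      · simp [phiW, pre, x₀, x₁]
      · simp at hη
  rw [mixedComp, tsum_supported_cons true _ hsupp]
  have hterm : ∀ η : List Bool,
      c (true :: η) * phiW e (true :: η) oneF (true :: w)
        = c (true :: η) * shuffle e.1 (phiW e η oneF) w := by
    intro η; simp [phiW, pre, x₀, x₁]
  simp only [hterm]
  rw [← shuffle_tsum e.1 (fun η => c (true :: η)) e w]
  rfl

lemma mixedComp_cons_false (c : FPS) (e : FPS × FPS) (w : List Bool) :
    mixedComp c e (false :: w) = mixedComp (fun u => c (false :: u)) e w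
      + shuffle e.2 (mixedComp (fun u => c (true :: u)) e) w := by
  set f : List Bool → ℝ := fun η => c η * phiW e η oneF (false :: w) with hf
  set g₁ : List Bool → ℝ := fun η => if η.head? = some true then f η else 0 with hg₁
  set g₂ : List Bool → ℝ := fun η => if η.head? = some false then f η else 0 with hg₂
  have hsplit : ∀ η, f η = g₁ η + g₂ η := by
    intro η
    rcases η with _ | ⟨y, t⟩
    · simp [hg₁, hg₂, hf, phiW, oneF]
    · cases y <;> simp [hg₁, hg₂]
  have hvan₁ : ∀ η ∉ listsLe (false :: w).length, g₁ η = 0 := by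
    intro η hη; simp only [hg₁]
    split
    · exact summand_vanish η hη
    · rfl
  have hvan₂ : ∀ η ∉ listsLe (false :: w).length, g₂ η = 0 := by
    intro η hη; simp only [hg₂]
    split
    · exact summand_vanish η hη
    · rfl
  have : mixedComp c e (false :: w) = (∑' η, g₁ η) + ∑' η, g₂ η := by
    have hfe : f = fun η => g₁ η + g₂ η := funext hsplit
    rw [mixedComp, show (fun η => c η * phiW e η oneF (false :: w)) = f from rfl, hfe]
    exact Summable.tsum_add (summable_of_ne_finset_zero hvan₁) (summable_of_ne_finset_zero hvan₂)
  rw [this]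
  have h₁ : ∑' η, g₁ η = shuffle e.2 (mixedComp (fun u => c (true :: u)) e) w := by
    rw [tsum_supported_cons true g₁ (fun η hη => by simp [hg₁, hη])]
    have hterm : ∀ η : List Bool, g₁ (true :: η)
        = c (true :: η) * shuffle e.2 (phiW e η oneF) w := by
      intro η; simp [hg₁, hf, phiW, pre, x₀, x₁]
    simp only [hterm]
    rw [← shuffle_tsum e.2 (fun η => c (true :: η)) e w]
    rfl
  have h₂ : ∑' η, g₂ η = mixedComp (fun u => c (false :: u)) e w := by
    rw [tsum_supported_cons false g₂ (fun η hη => by simp [hg₂, hη])]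
    have hterm : ∀ η : List Bool, g₂ (false :: η)
        = c (false :: η) * phiW e η oneF w := by
      intro η; simp [hg₂, hf, phiW, pre, x₀, x₁]
    simp only [hterm]
    rfl
  rw [h₁, h₂, add_comm]

/- ### compatibility with pre -/

lemma mixedComp_pre₀ (c : FPS) (e : FPS × FPS) :
    mixedComp (pre x₀ c) e = pre x₀ (mixedComp c e) := by
  funext w
  rcases w with _ | ⟨y, w⟩
  · rw [mixedComp_nil]; rfl
  · cases y
    · rw [mixedComp_cons_false]
      have h1 : (fun u => pre x₀ c (false :: u)) = c := by funext u; simp [pre, x₀]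
      have h2 : (fun u => pre x₀ c (true :: u)) = fun _ => (0 : ℝ) := by
        funext u; simp [pre, x₀]
      rw [h1, h2, mixedComp_zero, shuffle_zero_right']
      simp [pre, x₀]
    · rw [mixedComp_cons_true]
      have h2 : (fun u => pre x₀ c (true :: u)) = fun _ => (0 : ℝ) := by
        funext u; simp [pre, x₀]
      rw [h2, mixedComp_zero, shuffle_zero_right']
      simp [pre, x₀]

lemma mixedComp_pre₁ (c : FPS) (e : FPS × FPS) :
    mixedComp (pre x₁ c) e
      = pre x₁ (shuffle e.1 (mixedComp c e)) + pre x₀ (shuffle e.2 (mixedComp c e)) := by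
  funext w
  rcases w with _ | ⟨y, w⟩
  · rw [mixedComp_nil]; simp [pre, Pi.add_apply]
  · cases y
    · rw [mixedComp_cons_false]
      have h1 : (fun u => pre x₁ c (false :: u)) = fun _ => (0 : ℝ) := by
        funext u; simp [pre, x₁]
      have h2 : (fun u => pre x₁ c (true :: u)) = c := by funext u; simp [pre, x₁]
      rw [h1, h2, mixedComp_zero]
      simp [pre, x₀, x₁, Pi.add_apply, mixedComp_zero]
    · rw [mixedComp_cons_true]
      have h2 : (fun u => pre x₁ c (true :: u)) = c := by funext u; simp [pre, x₁]
      rw [h2]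
      simp [pre, x₀, x₁, Pi.add_apply]

/- ### the shuffle morphism property -/

lemma mixedComp_shuffle_aux (e : FPS × FPS) :
    ∀ n : ℕ, ∀ w : List Bool, w.length ≤ n → ∀ a b : FPS,
      mixedComp (shuffle a b) e w = shuffle (mixedComp a e) (mixedComp b e) w := by
  intro n
  induction n with
  | zero =>
    intro w hw a b
    rw [List.length_eq_zero_iff.mp (Nat.le_zero.mp hw)]
    simp only [mixedComp_nil, shuffle]
  | succ n ih =>
    intro w hw a b
    rcases w with _ | ⟨y, w⟩
    · simp only [mixedComp_nil, shuffle]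
    · have hwn : w.length ≤ n := Nat.succ_le_succ_iff.mp hw
      have hD : ∀ x : Bool, (fun u => shuffle a b (x :: u))
          = fun u => shuffle (fun v => a (x :: v)) b u + shuffle a (fun v => b (x :: v)) u := by
        intro x; funext u; simp only [shuffle]
      cases y
      · -- false
        rw [mixedComp_cons_false, hD false, hD true, mixedComp_add', mixedComp_add,
          ih w hwn _ b, ih w hwn a _]
        have hF : ∀ u : List Bool, u.length ≤ w.length →
            (fun v => mixedComp (shuffle (fun v => a (true :: v)) b) e v
              + mixedComp (shuffle a (fun v => b (true :: v))) e v) u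
            = (fun v => shuffle (mixedComp (fun v => a (true :: v)) e) (mixedComp b e) v
              + shuffle (mixedComp a e) (mixedComp (fun v => b (true :: v)) e) v) u := by
          intro u hu
          simp only []
          rw [ih u (le_trans hu hwn), ih u (le_trans hu hwn)]
        rw [shuffle_congr (c' := e.2) (fun _ _ => rfl) hF, shuffle_add_right']
        -- RHS
        conv_rhs => rw [shuffle]
        have hDa : (fun u => mixedComp a e (false :: u))
            = fun u => mixedComp (fun v => a (false :: v)) e u
              + shuffle e.2 (mixedComp (fun v => a (true :: v)) e) u := by
          funext u; rw [mixedComp_cons_false]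
        have hDb : (fun u => mixedComp b e (false :: u))
            = fun u => mixedComp (fun v => b (false :: v)) e u
              + shuffle e.2 (mixedComp (fun v => b (true :: v)) e) u := by
          funext u; rw [mixedComp_cons_false]
        rw [hDa, hDb, shuffle_add_left', shuffle_add_right']
        rw [show shuffle (shuffle e.2 (mixedComp (fun v => a (true :: v)) e)) (mixedComp b e)
            = shuffle e.2 (shuffle (mixedComp (fun v => a (true :: v)) e) (mixedComp b e))
          from shuffle_assoc _ _ _]
        rw [show shuffle (mixedComp a e) (shuffle e.2 (mixedComp (fun v => b (true :: v)) e))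
            = shuffle e.2 (shuffle (mixedComp a e) (mixedComp (fun v => b (true :: v)) e))
          from shuffle_left_comm _ _ _]
        ring
      · -- true
        rw [mixedComp_cons_true, hD true, mixedComp_add]
        have hF : ∀ u : List Bool, u.length ≤ w.length →
            (fun v => mixedComp (shuffle (fun v => a (true :: v)) b) e v
              + mixedComp (shuffle a (fun v => b (true :: v))) e v) u
            = (fun v => shuffle (mixedComp (fun v => a (true :: v)) e) (mixedComp b e) v
              + shuffle (mixedComp a e) (mixedComp (fun v => b (true :: v)) e) v) u := by
          intro u hu
          simp only []
          rw [ih u (le_trans hu hwn), ih u (le_trans hu hwn)]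
        rw [shuffle_congr (c' := e.1) (fun _ _ => rfl) hF, shuffle_add_right']
        conv_rhs => rw [shuffle]
        have hDa : (fun u => mixedComp a e (true :: u))
            = shuffle e.1 (mixedComp (fun v => a (true :: v)) e) := by
          funext u; rw [mixedComp_cons_true]
        have hDb : (fun u => mixedComp b e (true :: u))
            = shuffle e.1 (mixedComp (fun v => b (true :: v)) e) := by
          funext u; rw [mixedComp_cons_true]
        rw [hDa, hDb]
        rw [show shuffle (shuffle e.1 (mixedComp (fun v => a (true :: v)) e)) (mixedComp b e)
            = shuffle e.1 (shuffle (mixedComp (fun v => a (true :: v)) e) (mixedComp b e))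
          from shuffle_assoc _ _ _]
        rw [show shuffle (mixedComp a e) (shuffle e.1 (mixedComp (fun v => b (true :: v)) e))
            = shuffle e.1 (shuffle (mixedComp a e) (mixedComp (fun v => b (true :: v)) e))
          from shuffle_left_comm _ _ _]

lemma mixedComp_shuffle (a b : FPS) (e : FPS × FPS) :
    mixedComp (shuffle a b) e = shuffle (mixedComp a e) (mixedComp b e) :=
  funext fun w => mixedComp_shuffle_aux e w.length w le_rfl a b

/- ### compatibility with phiW -/

lemma mixedComp_oneF (e : FPS × FPS) : mixedComp oneF e = oneF := by
  funext w
  have h : ∀ η : List Bool, η ≠ [] → oneF η * phiW e η oneF w = 0 := by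
    intro η hη
    rcases η with _ | ⟨y, t⟩
    · exact absurd rfl hη
    · simp [oneF]
  rw [mixedComp, tsum_eq_single [] h]
  simp [oneF, phiW]

lemma pre_add' (x : Bool) (f g : FPS) (w : List Bool) :
    pre x (fun u => f u + g u) w = pre x f w + pre x g w := by
  rcases w with _ | ⟨y, u⟩
  · simp [pre]
  · simp only [pre]
    split <;> simp

lemma mixedComp_phiW (d e : FPS × FPS) (η : List Bool) :
    mixedComp (phiW d η oneF) e = phiW (compD d e) η oneF := by
  induction η with
  | nil => simpa only [phiW] using mixedComp_oneF e
  | cons x t ih =>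
    cases x with
    | false =>
      simp only [phiW, Bool.false_eq_true, if_false]
      rw [mixedComp_pre₀, ih]
    | true =>
      simp only [phiW]
      rw [if_pos trivial, if_pos trivial]
      rw [show pre x₁ (shuffle d.1 (phiW d t oneF)) + pre x₀ (shuffle d.2 (phiW d t oneF))
          = fun u => pre x₁ (shuffle d.1 (phiW d t oneF)) u
            + pre x₀ (shuffle d.2 (phiW d t oneF)) u from rfl,
        mixedComp_add]
      funext w
      rw [mixedComp_pre₁, mixedComp_pre₀, mixedComp_shuffle, mixedComp_shuffle, ih]
      rw [show (compD d e).1 = shuffle (mixedComp d.1 e) e.1 from rfl,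
        show (compD d e).2 = shuffle (mixedComp d.1 e) e.2 + mixedComp d.2 e from rfl]
      rw [show shuffle (shuffle (mixedComp d.1 e) e.2 + mixedComp d.2 e)
            (phiW (compD d e) t oneF)
          = fun v => shuffle (shuffle (mixedComp d.1 e) e.2) (phiW (compD d e) t oneF) v
            + shuffle (mixedComp d.2 e) (phiW (compD d e) t oneF) v from
        funext fun v => shuffle_add_left' _ _ _ v]
      simp only [Pi.add_apply]
      rw [pre_add']
      rw [shuffle_assoc, shuffle_assoc, shuffle_left_comm e.1, shuffle_left_comm e.2]
      ring


/-- Mixed associativity: `(c ∘̃ d_δ) ∘̃ e_δ = c ∘̃ (d_δ ∘ e_δ)`. -/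
theorem mixedComp_mixed_assoc (c : FPS) (d e : FPS × FPS) :
    mixedComp (mixedComp c d) e = mixedComp c (compD d e) := by
  funext w
  have hinner : ∀ η ∈ listsLe w.length,
      mixedComp c d η = ∑ σ ∈ listsLe w.length, c σ * phiW d σ oneF η := by
    intro η hη
    refine tsum_eq_sum ?_
    intro σ hσ
    have h1 : η.length ≤ w.length := mem_listsLe.mp hη
    have h2 : w.length < σ.length := by simpa [mem_listsLe, not_le] using hσ
    rw [phiW_eq_zero (lt_of_le_of_lt h1 h2), mul_zero]
  calc mixedComp (mixedComp c d) e w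
      = ∑ η ∈ listsLe w.length,
          (∑ σ ∈ listsLe w.length, c σ * phiW d σ oneF η) * phiW e η oneF w := by
        rw [mixedComp_eq_sum]
        exact Finset.sum_congr rfl fun η hη => by rw [hinner η hη]
    _ = ∑ σ ∈ listsLe w.length, ∑ η ∈ listsLe w.length,
          c σ * phiW d σ oneF η * phiW e η oneF w := by
        simp only [Finset.sum_mul]; exact Finset.sum_comm
    _ = ∑ σ ∈ listsLe w.length,
          c σ * ∑ η ∈ listsLe w.length, phiW d σ oneF η * phiW e η oneF w := by
        refine Finset.sum_congr rfl fun σ _ => ?_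
        rw [Finset.mul_sum]
        exact Finset.sum_congr rfl fun η _ => by ring
    _ = ∑ σ ∈ listsLe w.length, c σ * phiW (compD d e) σ oneF w := by
        refine Finset.sum_congr rfl fun σ _ => ?_
        rw [← mixedComp_eq_sum (phiW d σ oneF) e w, mixedComp_phiW]
    _ = mixedComp c (compD d e) w := (mixedComp_eq_sum c (compD d e) w).symm
end
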